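/- (Harada–Sai Lemma, length version) Let $R$ be a ring and let $M_1, \dots, M_{2^n}$ be indecomposable $R$-modules each of finite length at most $n$. Suppose given $R$-linear maps $f_i : M_i \to M_{i+1}$ for $1 \le i \le 2^n - 1$, none of which is an isomorphism. Then the composite $f_{2^n-1} \circ \cdots \circ f_1 = 0$. -/

import Mathlib

open LinearMap Submodule Function

variable {R : Type*} [Ring R]

/-- A module is indecomposable if it is nonzero and is not the direct sum of
two nonzero submodules. -/
def IsIndecomposableModule (R M : Type*) [Ring R] [AddCommGroup M] [Module R M] : Prop :=
  Nontrivial M ∧ ∀ p q : Submodule R M, IsCompl p q → p = ⊥ ∨ q = ⊥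

/-- The (Jordan–Hölder) length of a module: the length of a maximal chain of
submodules, i.e. the Krull dimension of its submodule lattice. -/
noncomputable def moduleLength (R M : Type*) [Ring R] [AddCommGroup M] [Module R M] :
    WithBot ℕ∞ :=
  Order.krullDim (Submodule R M)

/-- The composite `M 0 → M j` of the first `j` maps of a chain of linear maps. -/
def chainComp {M : ℕ → Type*} [∀ i, AddCommGroup (M i)] [∀ i, Module R (M i)]
    (f : ∀ i, M i →ₗ[R] M (i + 1)) : ∀ j, M 0 →ₗ[R] M j
  | 0 => LinearMap.id
  | (j + 1) => f j ∘ₗ chainComp f j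

open Order

universe u

section Aux

variable {A B : Type*} [AddCommGroup A] [Module R A] [AddCommGroup B] [Module R B]

/-- Strictness of the lift of a chain under `comap ⊓ p`. -/
lemma hs_lift_strict (φ : A →ₗ[R] B) {p : Submodule R A} {x y : Submodule R B}
    (hxy : x < y) (hy : y ≤ Submodule.map φ p) :
    Submodule.comap φ x ⊓ p < Submodule.comap φ y ⊓ p := by
  refine lt_of_le_of_ne (inf_le_inf_right p (Submodule.comap_mono hxy.le)) fun h => ?_
  apply hxy.ne
  refine le_antisymm hxy.le ?_
  have h1 : y ≤ Submodule.map φ (Submodule.comap φ y ⊓ p) := by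
    intro v hv
    obtain ⟨w, hw, rfl⟩ := hy hv
    exact ⟨w, ⟨hv, hw⟩, rfl⟩
  calc y ≤ Submodule.map φ (Submodule.comap φ y ⊓ p) := h1
    _ = Submodule.map φ (Submodule.comap φ x ⊓ p) := by rw [h]
    _ ≤ Submodule.map φ (Submodule.comap φ x) := Submodule.map_mono inf_le_left
    _ ≤ x := by rw [Submodule.map_comap_eq]; exact inf_le_right

lemma hs_height_map_le (φ : A →ₗ[R] B) (p : Submodule R A) :
    height (Submodule.map φ p) ≤ height p := by
  refine height_le fun q hq => ?_
  let q' : LTSeries (Submodule R A) :=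
    ⟨q.length, fun i => Submodule.comap φ (q i) ⊓ p, fun i =>
      hs_lift_strict φ (q.step i) (le_trans (q.monotone (Fin.le_last _)) hq.le)⟩
  have hlast : q'.last = p := by
    show Submodule.comap φ q.last ⊓ p = p
    rw [hq, Submodule.comap_map_eq]
    exact inf_eq_right.mpr le_sup_left
  calc (q.length : ℕ∞) = q'.length := rfl
    _ ≤ height q'.last := length_le_height_last
    _ = height p := by rw [hlast]

lemma hs_height_map_lt (φ : A →ₗ[R] B) (p : Submodule R A) (hfin : height p ≠ ⊤)
    (hker : ker φ ⊓ p ≠ ⊥) : height (Submodule.map φ p) < height p := by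
  have hle := hs_height_map_le φ p
  have hfin' : height (Submodule.map φ p) ≠ ⊤ := fun h => hfin (top_le_iff.mp (h ▸ hle))
  obtain ⟨m, hm⟩ : ∃ m : ℕ, height (Submodule.map φ p) = (m : ℕ∞) := Option.ne_none_iff_exists'.mp hfin'
  obtain ⟨q, hqlast, hqlen⟩ := exists_series_of_height_eq_coe _ hm
  let q' : LTSeries (Submodule R A) :=
    ⟨q.length, fun i => Submodule.comap φ (q i) ⊓ p, fun i =>
      hs_lift_strict φ (q.step i) (le_trans (q.monotone (Fin.le_last _)) hqlast.le)⟩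
  have hlast : q'.last = p := by
    show Submodule.comap φ q.last ⊓ p = p
    rw [hqlast, Submodule.comap_map_eq]
    exact inf_eq_right.mpr le_sup_left
  have hhead : (⊥ : Submodule R A) < q'.head := by
    rw [bot_lt_iff_ne_bot]
    intro h
    apply hker
    rw [← le_bot_iff, ← h]
    exact le_inf (le_trans inf_le_left (ker_le_comap φ)) inf_le_right
  have hlen2 : (↑(q.length + 1) : ℕ∞) ≤ height p := by
    have := length_le_height_last (p := q'.cons ⊥ hhead)
    rwa [RelSeries.last_cons, hlast, RelSeries.cons_length] at this
  rw [hqlen] at hlen2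
  rw [hm]
  calc (m : ℕ∞) < (m : ℕ∞) + 1 := by
        exact ENat.lt_add_one_iff (by simp) |>.mpr le_rfl
    _ ≤ height p := by exact_mod_cast hlen2

lemma hs_height_top_le (φ : A →ₗ[R] B) (hker : height (ker φ) ≠ ⊤)
    (hrange : height (range φ) ≠ ⊤) :
    height (⊤ : Submodule R A) ≤ height (ker φ) + height (range φ) := by
  refine height_le fun q hq => ?_
  have key : ∀ j, (hj : j ≤ q.length) →
      (j : ℕ∞) ≤ height ((q ⟨j, by omega⟩) ⊓ ker φ) + height (Submodule.map φ (q ⟨j, by omega⟩)) := by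
    intro j
    induction j with
    | zero => intro _; simp
    | succ j ih =>
      intro hj
      have hj' : j ≤ q.length := by omega
      have ihj := ih hj'
      have hstep : q ⟨j, by omega⟩ < q ⟨j + 1, by omega⟩ := q.step ⟨j, by omega⟩
      set x := q ⟨j, by omega⟩ with hx
      set y := q ⟨j + 1, by omega⟩ with hy
      have hfin1 : height (x ⊓ ker φ) ≠ ⊤ :=
        fun h => hker (top_le_iff.mp (h ▸ height_mono inf_le_right))
      have hfin2 : height (Submodule.map φ x) ≠ ⊤ := by
        refine fun h => hrange (top_le_iff.mp (h ▸ height_mono ?_))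
        rw [← Submodule.map_top (f := φ)]
        exact Submodule.map_mono le_top
      push_cast
      rcases lt_or_eq_of_le (inf_le_inf_right (ker φ) hstep.le) with h1 | h1
      · have := (ENat.add_one_le_iff hfin1).mpr (height_strictMono h1 (lt_top_iff_ne_top.mpr hfin1))
        calc (j : ℕ∞) + 1 ≤ (height (x ⊓ ker φ) + height (Submodule.map φ x)) + 1 := by
              exact add_le_add_left ihj 1
          _ = (height (x ⊓ ker φ) + 1) + height (Submodule.map φ x) := by ring
          _ ≤ height (y ⊓ ker φ) + height (Submodule.map φ x) := add_le_add_left this _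
          _ ≤ height (y ⊓ ker φ) + height (Submodule.map φ y) :=
              add_le_add_right (height_mono (Submodule.map_mono hstep.le)) _
      · -- the kernel part is equal, so the image must strictly increase
        have h2 : Submodule.map φ x < Submodule.map φ y := by
          refine lt_of_le_of_ne (Submodule.map_mono hstep.le) fun h => ?_
          apply hstep.ne
          refine le_antisymm hstep.le (le_of_eq ?_)
          have hy2 : y ≤ x ⊔ ker φ := by
            rw [← Submodule.comap_map_eq φ x, h]
            exact Submodule.le_comap_map φ y
          calc y = (x ⊔ ker φ) ⊓ y := (inf_eq_right.mpr hy2).symm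
            _ = x ⊔ (ker φ ⊓ y) := sup_inf_assoc_of_le _ hstep.le
            _ = x ⊔ (y ⊓ ker φ) := by rw [inf_comm]
            _ = x ⊔ (x ⊓ ker φ) := by rw [← h1]
            _ = x := sup_eq_left.mpr inf_le_left
        have := (ENat.add_one_le_iff hfin2).mpr (height_strictMono h2 (lt_top_iff_ne_top.mpr hfin2))
        calc (j : ℕ∞) + 1 ≤ (height (x ⊓ ker φ) + height (Submodule.map φ x)) + 1 := by
              exact add_le_add_left ihj 1
          _ = height (x ⊓ ker φ) + (height (Submodule.map φ x) + 1) := by ring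
          _ ≤ height (x ⊓ ker φ) + height (Submodule.map φ y) := add_le_add_right this _
          _ ≤ height (y ⊓ ker φ) + height (Submodule.map φ y) :=
              add_le_add_left (height_mono (inf_le_inf_right _ hstep.le)) _
  have := key q.length le_rfl
  have hlast : q ⟨q.length, by omega⟩ = ⊤ := hq
  rw [hlast] at this
  simpa using this

lemma hs_height_sup_ge {p r : Submodule R A} (hfin : height (p ⊔ r) ≠ ⊤)
    (hdis : p ⊓ r = ⊥) : height p + height r ≤ height (p ⊔ r) := by
  have hp : height p ≠ ⊤ := fun h => hfin (top_le_iff.mp (h ▸ height_mono le_sup_left))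
  have hr : height r ≠ ⊤ := fun h => hfin (top_le_iff.mp (h ▸ height_mono le_sup_right))
  obtain ⟨l, hl⟩ : ∃ l : ℕ, height r = (l : ℕ∞) := Option.ne_none_iff_exists'.mp hr
  obtain ⟨d, hdlast, hdlen⟩ := exists_series_of_height_eq_coe _ hl
  have key : ∀ j, (hj : j ≤ d.length) →
      height p + (j : ℕ∞) ≤ height (p ⊔ d ⟨j, by omega⟩) := by
    intro j
    induction j with
    | zero => intro _; simpa using height_mono (le_sup_left : p ≤ p ⊔ d ⟨0, by omega⟩)
    | succ j ih =>
      intro hj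
      have hj' : j ≤ d.length := by omega
      have ihj := ih hj'
      have hstep : d ⟨j, by omega⟩ < d ⟨j + 1, by omega⟩ := d.step ⟨j, by omega⟩
      set x := d ⟨j, by omega⟩
      set y := d ⟨j + 1, by omega⟩
      have hyr : y ≤ r := le_trans (d.monotone (Fin.le_last _)) hdlast.le
      have hxr : x ≤ r := le_trans hstep.le hyr
      have hfin1 : height (p ⊔ x) ≠ ⊤ :=
        fun h => hfin (top_le_iff.mp (h ▸ height_mono (sup_le_sup_left hxr p)))
      have h2 : p ⊔ x < p ⊔ y := by
        refine lt_of_le_of_ne (sup_le_sup_left hstep.le p) fun h => ?_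
        apply hstep.ne
        refine le_antisymm hstep.le ?_
        have hy2 : y ≤ (x ⊔ p) ⊓ r := le_inf (by rw [sup_comm, h]; exact le_sup_right) hyr
        calc y ≤ (x ⊔ p) ⊓ r := hy2
          _ = x ⊔ (p ⊓ r) := sup_inf_assoc_of_le _ hxr
          _ = x := by rw [hdis, sup_bot_eq]
      have hsucc := (ENat.add_one_le_iff hfin1).mpr
        (height_strictMono h2 (lt_top_iff_ne_top.mpr hfin1))
      push_cast
      calc height p + ((j : ℕ∞) + 1) = (height p + j) + 1 := by ring
        _ ≤ height (p ⊔ x) + 1 := add_le_add_left ihj 1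
        _ ≤ height (p ⊔ y) := hsucc
  have hfinal := key d.length le_rfl
  have hlast : d ⟨d.length, by omega⟩ = r := hdlast
  rw [hlast] at hfinal
  rw [hl, ← hdlen]
  exact hfinal

lemma hs_height_top_le_of_len {X : Type*} [AddCommGroup X] [Module R X] {c : ℕ∞}
    (h : Order.krullDim (Submodule R X) ≤ (c : WithBot ℕ∞)) :
    height (⊤ : Submodule R X) ≤ c := by
  have h2 := height_le_krullDim (⊤ : Submodule R X)
  exact_mod_cast h2.trans h

end Aux

lemma chainComp_split {M : ℕ → Type*} [∀ i, AddCommGroup (M i)] [∀ i, Module R (M i)]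
    (f : ∀ i, M i →ₗ[R] M (i + 1)) (j : ℕ) :
    ∀ m, chainComp f (j + m) =
      (chainComp (M := fun i => M (j + i)) (fun i => f (j + i)) m).comp (chainComp f j)
  | 0 => (LinearMap.id_comp _).symm
  | (m + 1) => by
      show f (j + m) ∘ₗ chainComp f (j + m)
        = (f (j + m) ∘ₗ chainComp (M := fun i => M (j + i)) (fun i => f (j + i)) m).comp
            (chainComp f j)
      rw [chainComp_split f j m, LinearMap.comp_assoc]

lemma hs_aux (n : ℕ) : ∀ k, k ≤ n →
    ∀ (M : ℕ → Type u) [∀ i, AddCommGroup (M i)] [∀ i, Module R (M i)]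
      (f : ∀ i, M i →ₗ[R] M (i + 1)),
      (∀ i < 2 ^ k, IsIndecomposableModule R (M i)) →
      (∀ i < 2 ^ k, moduleLength R (M i) ≤ (n : ℕ∞)) →
      (∀ i < 2 ^ k - 1, ¬ Bijective (f i)) →
      height (LinearMap.range (chainComp f (2 ^ k - 1))) ≤ ((n - k : ℕ) : ℕ∞) := by
  intro k
  induction k with
  | zero =>
    intro _ M _ _ f hindec hlen hnotiso
    have h0 : (2 : ℕ) ^ 0 - 1 = 0 := rfl
    rw [h0]
    show height (LinearMap.range (LinearMap.id : M 0 →ₗ[R] M 0)) ≤ _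
    rw [LinearMap.range_id]
    exact hs_height_top_le_of_len (hlen 0 (by norm_num))
  | succ k IH =>
    intro hk1 M _ _ f hindec hlen hnotiso
    have hk : k ≤ n := by omega
    have h2p : 2 ^ (k + 1) = 2 ^ k + 2 ^ k := by rw [pow_succ]; ring
    have hone : 1 ≤ 2 ^ k := Nat.one_le_two_pow
    obtain ⟨t, ht⟩ : ∃ t, 2 ^ k = t + 1 := ⟨2 ^ k - 1, by omega⟩
    -- the two halves and the middle map
    set g := chainComp f t with hg
    set e := chainComp (M := fun i => M (t + 1 + i)) (fun i => f (t + 1 + i)) t with he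
    set q : Submodule R (M t) := LinearMap.range g with hq
    set p : Submodule R (M (t + 1)) := Submodule.map (f t) q with hp
    -- rewrite the goal
    have hsplit : 2 ^ (k + 1) - 1 = (t + 1) + t := by omega
    rw [hsplit, chainComp_split f (t + 1) t]
    have hmid : chainComp f (t + 1) = (f t) ∘ₗ chainComp f t := rfl
    rw [LinearMap.range_comp, hmid, LinearMap.range_comp, ← hg, ← hq, ← hp, ← he]
    -- the two induction hypotheses
    have IHa : height q ≤ ((n - k : ℕ) : ℕ∞) := by
      have := IH hk M f (fun i hi => hindec i (by omega)) (fun i hi => hlen i (by omega))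
        (fun i hi => hnotiso i (by omega))
      rwa [ht, Nat.add_sub_cancel, ← hg, ← hq] at this
    have IHb : height (LinearMap.range e) ≤ ((n - k : ℕ) : ℕ∞) := by
      have := IH hk (fun i => M (t + 1 + i)) (fun i => f (t + 1 + i))
        (fun i hi => hindec (t + 1 + i) (by omega)) (fun i hi => hlen (t + 1 + i) (by omega))
        (fun i hi => hnotiso (t + 1 + i) (by omega))
      rwa [ht, Nat.add_sub_cancel, ← he] at this
    by_contra hcon
    -- the composite has height exactly n - k
    have hle1 : height (Submodule.map e p) ≤ height p := hs_height_map_le e p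
    have hle2 : height p ≤ height q := hs_height_map_le (f t) q
    have hnk : (n - (k + 1)) + 1 = n - k := by omega
    have hgt : ((n - (k + 1) : ℕ) : ℕ∞) < height (Submodule.map e p) := not_le.mp hcon
    have heq : height (Submodule.map e p) = ((n - k : ℕ) : ℕ∞) := by
      refine le_antisymm (hle1.trans (hle2.trans IHa)) ?_
      have := (ENat.add_one_le_iff (by simp)).mpr hgt
      calc ((n - k : ℕ) : ℕ∞) = ((n - (k + 1) : ℕ) : ℕ∞) + 1 := by
            rw [← hnk]; push_cast; ring
        _ ≤ height (Submodule.map e p) := this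
    have hhp : height p = ((n - k : ℕ) : ℕ∞) :=
      le_antisymm (hle2.trans IHa) (heq ▸ hle1)
    have hhq : height q = ((n - k : ℕ) : ℕ∞) :=
      le_antisymm IHa (hhp ▸ hle2)
    have hnk1 : 1 ≤ n - k := by omega
    have hfinp : height p ≠ ⊤ := by rw [hhp]; simp
    have hfinq : height q ≠ ⊤ := by rw [hhq]; simp
    -- step 1 : ker e ⊓ p = ⊥
    have disj1 : ker e ⊓ p = ⊥ := by
      by_contra hker
      exact absurd (heq.trans hhp.symm) (ne_of_lt (hs_height_map_lt e p hfinp hker))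
    -- heights of the ambient modules
    have htopB' : height (⊤ : Submodule R (M (t + 1))) ≤ (n : ℕ∞) :=
      hs_height_top_le_of_len (hlen (t + 1) (by omega))
    have htopB : height (⊤ : Submodule R (M t)) ≤ (n : ℕ∞) :=
      hs_height_top_le_of_len (hlen t (by omega))
    have htopC : height (⊤ : Submodule R (M (t + 1 + t))) ≤ (n : ℕ∞) :=
      hs_height_top_le_of_len (hlen (t + 1 + t) (by omega))
    have hkerfin : height (ker e) ≠ ⊤ := by
      intro h
      have := (height_mono (le_top : ker e ≤ ⊤)).trans htopB'
      rw [h] at this; simp at this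
    have hrangefin : height (range e) ≠ ⊤ := by
      intro h
      have := (height_mono (le_top : range e ≤ ⊤)).trans htopC
      rw [h] at this; simp at this
    -- step 2 : p ⊔ ker e = ⊤, so IsCompl p (ker e)
    have h3 : height (⊤ : Submodule R (M (t + 1))) ≤ height (ker e) + height p := by
      calc height (⊤ : Submodule R (M (t + 1))) ≤ height (ker e) + height (range e) :=
            hs_height_top_le e hkerfin hrangefin
        _ ≤ height (ker e) + height p := add_le_add_right (IHb.trans hhp.symm.le) _
    have hfinsup1 : height (p ⊔ ker e) ≠ ⊤ := by
      intro h
      have := (height_mono (le_top : p ⊔ ker e ≤ ⊤)).trans htopB'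
      rw [h] at this; simp at this
    have hsup1 : height p + height (ker e) ≤ height (p ⊔ ker e) :=
      hs_height_sup_ge hfinsup1 (by rw [inf_comm]; exact disj1)
    have htope1 : p ⊔ ker e = ⊤ := by
      rcases lt_or_eq_of_le (le_top : p ⊔ ker e ≤ ⊤) with hlt | hres
      · exfalso
        have hlt2 := height_strictMono hlt (lt_top_iff_ne_top.mpr hfinsup1)
        have : height (⊤ : Submodule R (M (t + 1))) ≤ height (p ⊔ ker e) := by
          calc height (⊤ : Submodule R (M (t + 1))) ≤ height (ker e) + height p := h3
            _ = height p + height (ker e) := by ring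
            _ ≤ height (p ⊔ ker e) := hsup1
        exact absurd this (not_le.mpr hlt2)
      · exact hres
    have hcompl1 : IsCompl p (ker e) :=
      ⟨disjoint_iff.mpr (by rw [inf_comm]; exact disj1), codisjoint_iff.mpr htope1⟩
    rcases (hindec (t + 1) (by omega)).2 p (ker e) hcompl1 with hbot | hkerbot
    · -- p = ⊥ is impossible since height p = n - k ≥ 1
      rw [hbot, height_bot] at hhp
      have : n - k = 0 := by exact_mod_cast hhp.symm
      omega
    -- so e is injective and p = ⊤
    have ptop : p = ⊤ := by
      rw [hkerbot, sup_bot_eq] at htope1; exact htope1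
    -- step 3 : the same argument one step down
    have disj2 : ker (f t) ⊓ q = ⊥ := by
      by_contra hker
      have := hs_height_map_lt (f t) q hfinq hker
      rw [← hp, hhp, hhq] at this
      exact absurd this (lt_irrefl _)
    have hrangeft : range (f t) = ⊤ := by
      have hple : p ≤ range (f t) := by
        rw [hp, ← Submodule.map_top]
        exact Submodule.map_mono le_top
      exact top_le_iff.mp (ptop ▸ hple)
    have hkerftfin : height (ker (f t)) ≠ ⊤ := by
      intro h
      have := (height_mono (le_top : ker (f t) ≤ ⊤)).trans htopB
      rw [h] at this; simp at this
    have h4 : height (⊤ : Submodule R (M t)) ≤ height (ker (f t)) + height q := by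
      calc height (⊤ : Submodule R (M t))
          ≤ height (ker (f t)) + height (range (f t)) :=
            hs_height_top_le (f t) hkerftfin (by rw [hrangeft, ← ptop, hhp]; simp)
        _ = height (ker (f t)) + height p := by rw [hrangeft, ptop]
        _ = height (ker (f t)) + height q := by rw [hhp, hhq]
    have hfinsup2 : height (q ⊔ ker (f t)) ≠ ⊤ := by
      intro h
      have := (height_mono (le_top : q ⊔ ker (f t) ≤ ⊤)).trans htopB
      rw [h] at this; simp at this
    have hsup2 : height q + height (ker (f t)) ≤ height (q ⊔ ker (f t)) :=
      hs_height_sup_ge hfinsup2 (by rw [inf_comm]; exact disj2)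
    have htope2 : q ⊔ ker (f t) = ⊤ := by
      rcases lt_or_eq_of_le (le_top : q ⊔ ker (f t) ≤ ⊤) with hlt | hres
      · exfalso
        have hlt2 := height_strictMono hlt (lt_top_iff_ne_top.mpr hfinsup2)
        have : height (⊤ : Submodule R (M t)) ≤ height (q ⊔ ker (f t)) := by
          calc height (⊤ : Submodule R (M t)) ≤ height (ker (f t)) + height q := h4
            _ = height q + height (ker (f t)) := by ring
            _ ≤ height (q ⊔ ker (f t)) := hsup2
        exact absurd this (not_le.mpr hlt2)
      · exact hres
    have hcompl2 : IsCompl q (ker (f t)) :=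
      ⟨disjoint_iff.mpr (by rw [inf_comm]; exact disj2), codisjoint_iff.mpr htope2⟩
    rcases (hindec t (by omega)).2 q (ker (f t)) hcompl2 with hbot | hkerbot2
    · rw [hbot, height_bot] at hhq
      have : n - k = 0 := by exact_mod_cast hhq.symm
      omega
    · exact hnotiso t (by omega)
        ⟨LinearMap.ker_eq_bot.mp hkerbot2, LinearMap.range_eq_top.mp hrangeft⟩

/-- **Harada–Sai lemma.** If `M 0, …, M (2^n - 1)` are indecomposable modules of
length at most `n` and none of the maps `f i : M i → M (i+1)` (for
`i < 2^n - 1`) is an isomorphism, then the composite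
`M 0 → M (2^n - 1)` of all `2^n - 1` maps is zero. -/
theorem harada_sai (n : ℕ) (M : ℕ → Type*) [∀ i, AddCommGroup (M i)]
    [∀ i, Module R (M i)] (f : ∀ i, M i →ₗ[R] M (i + 1))
    (hindec : ∀ i < 2 ^ n, IsIndecomposableModule R (M i))
    (hlen : ∀ i < 2 ^ n, moduleLength R (M i) ≤ (n : ℕ∞))
    (hnotiso : ∀ i < 2 ^ n - 1, ¬ Bijective (f i)) :
    chainComp f (2 ^ n - 1) = 0 := by
  have h := hs_aux n n le_rfl M f hindec hlen hnotiso
  rw [Nat.sub_self] at h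
  have h0 : Order.height (LinearMap.range (chainComp f (2 ^ n - 1))) = 0 :=
    le_antisymm (by exact_mod_cast h) zero_le
  rw [Order.height_eq_zero] at h0
  rw [← LinearMap.range_eq_bot]
  exact isMin_iff_eq_bot.mp h0
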